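/- Generalized Fredholm inversion: if K ∈ CF(W × X) and K' ∈ CF(X × W) satisfy ∫_X K(w,x) K'(x,w') dχ(x) = (μ − λ) δ_{w=w'} + λ for all w, w' ∈ W, then for all h ∈ CF(W), (R_{K'} ∘ R_K) h = (μ − λ) h + λ (∫_W h dχ) 1_W. -/
import Mathlib


open Classical

/-- Generalized Fredholm inversion for weighted Radon transforms: if the constructible
kernels `K ∈ CF(W × X)` and `K' ∈ CF(X × W)` satisfy
`∫_X K(w,x) K'(x,w') dχ(x) = (μ − λ)·δ_{w=w'} + λ` for all `w, w' ∈ W`, then for all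
constructible `h` on `W`, `(R_{K'} ∘ R_K) h = (μ − λ)·h + λ·(∫_W h dχ)·1_W`, where
`(R_K h)(x) = ∫_W h(w) K(w,x) dχ(w)` and `(R_{K'} g)(w') = ∫_X g(x) K'(x,w') dχ(x)`.
`IW`, `IX` are the Euler integrals: `ℤ`-linear extensions of the Euler characteristics
(points have `χW = 1`), satisfying the Fubini interchange `hswap` on `W × X`. -/
theorem fredholm_inversion {W X : Type*}
    (χW : Set W → ℤ)
    (IW : (W → ℤ) → ℤ) (IX : (X → ℤ) → ℤ)
    (hWadd : ∀ f g : W → ℤ, IW (f + g) = IW f + IW g)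
    (hWsmul : ∀ (c : ℤ) (f : W → ℤ), IW (c • f) = c * IW f)
    (hWind : ∀ A : Set W, IW (A.indicator 1) = χW A)
    (hXadd : ∀ f g : X → ℤ, IX (f + g) = IX f + IX g)
    (hXsmul : ∀ (c : ℤ) (f : X → ℤ), IX (c • f) = c * IX f)
    (hswap : ∀ k : W → X → ℤ,
        IX (fun x => IW (fun w => k w x)) = IW (fun w => IX (fun x => k w x)))
    (hpt : ∀ w : W, χW {w} = 1)
    (K : W → X → ℤ) (K' : X → W → ℤ) (μ lam : ℤ)
    (hKK' : ∀ w w' : W,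
        IX (fun x => K w x * K' x w') = (if w = w' then μ - lam else 0) + lam)
    (h : W → ℤ) :
    ∀ w' : W,
      IX (fun x => (IW (fun w => h w * K w x)) * K' x w')
        = (μ - lam) * h w' + lam * IW h := by
  intro w'
  have step1 : (fun x => (IW (fun w => h w * K w x)) * K' x w')
      = fun x => IW (fun w => h w * K w x * K' x w') := by
    funext x
    rw [mul_comm, ← hWsmul]
    congr 1
    funext w
    simp only [Pi.smul_apply, smul_eq_mul]
    ring
  rw [step1, hswap (fun w x => h w * K w x * K' x w')]
  have step2 : (fun w => IX (fun x => h w * K w x * K' x w'))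
      = fun w => h w * ((if w = w' then μ - lam else 0) + lam) := by
    funext w
    have h1 : (fun x => h w * K w x * K' x w') = h w • fun x => K w x * K' x w' := by
      funext x; simp only [Pi.smul_apply, smul_eq_mul]; ring
    rw [h1, hXsmul, hKK']
  rw [step2]
  have split : (fun w => h w * ((if w = w' then μ - lam else 0) + lam))
      = ((h w' * (μ - lam)) • Set.indicator {w'} (1 : W → ℤ)) + (lam • h) := by
    funext w
    by_cases hw : w = w'
    · subst hw
      simp [Set.indicator_of_mem]
      ring
    · simp [Set.indicator_of_notMem, hw]
      ring
  rw [split, hWadd, hWsmul, hWsmul, hWind, hpt]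
  ring
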